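/- Let U(y) = |log(y/2) − 2/(1+4y²)| + 2/(3y) + 1/(8y²) for y ≥ 1/2. Then U(y) ≤ log y for all y ≥ 2. -/
import Mathlib


theorem stmt_7 (y : ℝ) (hy : 2 ≤ y) :
    |Real.log (y/2) - 2/(1 + 4*y^2)| + 2/(3*y) + 1/(8*y^2) ≤ Real.log y := by
  have hy0 : (0:ℝ) < y := by linarith
  have h1 : (1:ℝ) ≤ y / 2 := by linarith
  have hlog : Real.log (y/2) = Real.log y - Real.log 2 := by
    rw [Real.log_div (by linarith) (by norm_num)]
  have hlognn : 0 ≤ Real.log (y/2) := Real.log_nonneg h1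
  have hpos : (0:ℝ) < 1 + 4*y^2 := by nlinarith
  have habs : |Real.log (y/2) - 2/(1 + 4*y^2)| ≤ Real.log (y/2) + 2/(1 + 4*y^2) := by
    rw [abs_sub_le_iff]
    constructor <;> [skip; skip] <;>
      · have : 0 ≤ 2/(1 + 4*y^2) := by positivity
        linarith
  have h2 : 2/(1 + 4*y^2) ≤ 2/17 := by
    apply div_le_div_of_nonneg_left (by norm_num) (by norm_num)
    nlinarith
  have h3 : 2/(3*y) ≤ 1/3 := by
    rw [div_le_div_iff₀ (by linarith) (by norm_num)]
    linarith
  have h4 : 1/(8*y^2) ≤ 1/32 := by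
    rw [div_le_div_iff₀ (by positivity) (by norm_num)]
    nlinarith
  have hl2 : (0.6931471803 : ℝ) < Real.log 2 := Real.log_two_gt_d9
  calc |Real.log (y/2) - 2/(1 + 4*y^2)| + 2/(3*y) + 1/(8*y^2)
      ≤ (Real.log (y/2) + 2/(1 + 4*y^2)) + 2/(3*y) + 1/(8*y^2) := by linarith
    _ ≤ Real.log y - Real.log 2 + 2/17 + 1/3 + 1/32 := by rw [hlog] at *; linarith
    _ ≤ Real.log y := by linarith
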